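/- Let X be a set, I : X → [0,∞], H̃ : X → ℝ, γ ≥ 0, β ∈ ℝ. Define s(u) = -inf{I(x) : H̃(x) = u}, s_γ(u) = s(u) - γu², and E_{β,γ} = {x : I(x) + βH̃(x) + γ[H̃(x)]² = inf_y (I(y) + βH̃(y) + γ[H̃(y)]²)}. Then for every x ∈ E_{β,γ}, setting u = H̃(x), one has s(u) > -∞ and x ∈ E^u = {y : H̃(y) = u, I(y) = -s(u)}. -/

import Mathlib

open scoped ENNReal

/-- The microcanonical entropy `s(u) = -inf{I(x) : H̃(x) = u}` (with `inf ∅ = +∞`). -/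
noncomputable def microEnt {X : Type*} (I : X → ℝ≥0∞) (H : X → ℝ) (u : ℝ) : EReal :=
  -(⨅ x : {y : X // H y = u}, ((I x.1 : ℝ≥0∞) : EReal))

/-- Gaussian equilibrium macrostates are always realized microcanonically: every
`x ∈ E_{β,γ}` satisfies `s(H̃(x)) > -⊤` and `x ∈ E^{H̃(x)}`. -/
theorem stmt11 {X : Type*} (I : X → ℝ≥0∞) (H : X → ℝ) (β γ : ℝ) (hγ : 0 ≤ γ)
    (hne : ∃ x : X, I x ≠ ⊤) :
    ∀ x ∈ {x : X | (I x : EReal) + ((β * H x + γ * (H x) ^ 2 : ℝ) : EReal) =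
        ⨅ y : X, ((I y : EReal) + ((β * H y + γ * (H y) ^ 2 : ℝ) : EReal))},
      microEnt I H (H x) ≠ ⊥ ∧ (I x : EReal) = -(microEnt I H (H x)) := by
  intro x hx
  simp only [Set.mem_setOf_eq] at hx
  obtain ⟨x0, hx0⟩ := hne
  -- I x ≠ ⊤
  have hIx : (I x : EReal) ≠ ⊤ := by
    intro h
    have h1 : (I x : EReal) + ((β * H x + γ * (H x) ^ 2 : ℝ) : EReal)
        ≤ (I x0 : EReal) + ((β * H x0 + γ * (H x0) ^ 2 : ℝ) : EReal) := hx ▸ iInf_le _ x0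
    have h2 : (I x0 : EReal) + ((β * H x0 + γ * (H x0) ^ 2 : ℝ) : EReal) < ⊤ := by
      refine EReal.add_lt_top ?_ (EReal.coe_ne_top _)
      simpa using hx0
    rw [h, EReal.top_add_of_ne_bot (EReal.coe_ne_bot _)] at h1
    exact absurd (lt_of_le_of_lt h1 h2) (lt_irrefl _)
  -- I x ≤ I y for all y with H y = H x
  have key : ∀ y : {y : X // H y = H x}, (I x : EReal) ≤ (I y.1 : EReal) := by
    rintro ⟨y, hy⟩
    have h1 : (I x : EReal) + ((β * H x + γ * (H x) ^ 2 : ℝ) : EReal)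
        ≤ (I y : EReal) + ((β * H y + γ * (H y) ^ 2 : ℝ) : EReal) := hx ▸ iInf_le _ y
    rw [hy] at h1
    exact (EReal.addLECancellable_coe _).add_le_add_iff_right.1 h1
  have hinf : (⨅ y : {y : X // H y = H x}, ((I y.1 : ℝ≥0∞) : EReal)) = (I x : EReal) := by
    refine le_antisymm (iInf_le _ (⟨x, rfl⟩ : {y : X // H y = H x})) (le_iInf key)
  constructor
  · rw [microEnt, hinf]
    exact fun h => hIx (EReal.neg_eq_bot_iff.1 h)
  · rw [microEnt, neg_neg, hinf]
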